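/- Normal-form instance: over the alphabet A with A_s = {a,b} and A_e = {c,d}, the sentence φ_4 = ∀x.((∃^{=2} y.(x∼y ∧ a(y))) ↔ (∃^{=2} y.(x∼y ∧ d(y)))) is equivalent, over all pairs (P,w) of a process triple and a P-execution, to φ_4' = ⋀_{θ∈T, ℓ∈Z} ∃^{=0} y.(θ(y) ∧ ψ_{3,ℓ}(y)), where Z is the set of vectors ℓ ∈ {0,…,3}^A such that ℓ(a) = 2 ≠ ℓ(d) or ℓ(d) = 2 ≠ ℓ(a). -/

import Mathlib

namespace PSyn

/-! ### Basic objects: types, alphabets, processes, events, executions -/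

/-- The three process types: system, environment, mixed. -/
inductive PType where
  | s | e | se
deriving DecidableEq

/-- A finite alphabet: letters are the naturals `0, …, n-1`;
`sys a = true` means `a` is a system action (`a ∈ A_s`), otherwise `a ∈ A_e`. -/
structure Alphabet where
  n : ℕ
  sys : ℕ → Bool

/-- An event is a pair (letter, process identity). -/
abbrev Event := ℕ × ℕ

/-- A process triple `P = (P_s, P_e, P_se)`: pairwise disjoint finite sets of processes. -/
structure ProcTriple where
  Ps : Finset ℕ
  Pe : Finset ℕ
  Pse : Finset ℕ
  disj_se : Disjoint Ps Pe
  disj_sse : Disjoint Ps Pse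
  disj_ese : Disjoint Pe Pse

def ProcTriple.ofType (P : ProcTriple) : PType → Finset ℕ
  | .s => P.Ps
  | .e => P.Pe
  | .se => P.Pse

def ProcTriple.all (P : ProcTriple) : Finset ℕ := P.Ps ∪ P.Pe ∪ P.Pse

/-- `σ ∈ Σ_s = A_s × (P_s ∪ P_se)`. -/
def isSysEvent (Alph : Alphabet) (P : ProcTriple) (σ : Event) : Prop :=
  σ.1 < Alph.n ∧ Alph.sys σ.1 = true ∧ (σ.2 ∈ P.Ps ∨ σ.2 ∈ P.Pse)

/-- `σ ∈ Σ_e = A_e × (P_e ∪ P_se)`. -/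
def isEnvEvent (Alph : Alphabet) (P : ProcTriple) (σ : Event) : Prop :=
  σ.1 < Alph.n ∧ Alph.sys σ.1 = false ∧ (σ.2 ∈ P.Pe ∨ σ.2 ∈ P.Pse)

def isEvent (Alph : Alphabet) (P : ProcTriple) (σ : Event) : Prop :=
  isSysEvent Alph P σ ∨ isEnvEvent Alph P σ

/-- A finite or infinite word over events. -/
inductive Exec where
  | fin : List Event → Exec
  | inf : (ℕ → Event) → Exec

/-- A `P`-execution: every event is an event of `P` over the alphabet. -/
def Exec.valid (Alph : Alphabet) (P : ProcTriple) : Exec → Prop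
  | .fin l => ∀ σ ∈ l, isEvent Alph P σ
  | .inf g => ∀ i, isEvent Alph P (g i)

def Exec.at? : Exec → ℕ → Option Event
  | .fin l, i => l[i]?
  | .inf g, i => some (g i)

/-- The set of positions of an execution. -/
def Exec.posDom : Exec → ℕ → Prop
  | .fin l, i => i < l.length
  | .inf _, _ => True

/-- Elements of the structure associated with `(P, w)`:
`inl p` is a process, `inr i` is a position. -/
abbrev Elem := ℕ ⊕ ℕ

/-- The universe `P ⊎ Pos(w)`. -/
def elemDom (P : ProcTriple) (w : Exec) : Elem → Prop
  | .inl p => p ∈ P.all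
  | .inr i => w.posDom i

/-- The process an element belongs to (a process belongs to itself; a position
to the process executing it).  Two elements are `∼`-equivalent iff they have
the same process. -/
def procOf (w : Exec) : Elem → Option ℕ
  | .inl p => some p
  | .inr i => (w.at? i).map Prod.snd

def letterOf (w : Exec) : Elem → Option ℕ
  | .inl _ => none
  | .inr i => (w.at? i).map Prod.fst

/-! ### First-order logic FO_A[∼,<,+1] -/

/-- Syntax of `FO_A[∼,<,+1]`; variables are naturals, letters are naturals. -/
inductive FO where
  | ptype : PType → ℕ → FO
  | letter : ℕ → ℕ → FO
  | eq : ℕ → ℕ → FO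
  | sim : ℕ → ℕ → FO
  | lt : ℕ → ℕ → FO
  | succ : ℕ → ℕ → FO
  | not : FO → FO
  | or : FO → FO → FO
  | ex : ℕ → FO → FO

/-- Satisfaction of a formula in the structure `S_(P,w)` under a valuation. -/
def Sat (P : ProcTriple) (w : Exec) : (ℕ → Elem) → FO → Prop
  | v, .ptype θ x => ∃ p, v x = Sum.inl p ∧ p ∈ P.ofType θ
  | v, .letter a x => letterOf w (v x) = some a
  | v, .eq x y => v x = v y
  | v, .sim x y => (procOf w (v x)).isSome ∧ procOf w (v x) = procOf w (v y)
  | v, .lt x y => ∃ i j, v x = Sum.inr i ∧ v y = Sum.inr j ∧ i < j ∧ w.posDom j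
  | v, .succ x y => ∃ i, v x = Sum.inr i ∧ v y = Sum.inr (i + 1) ∧ w.posDom (i + 1)
  | v, .not φ => ¬ Sat P w v φ
  | v, .or φ ψ => Sat P w v φ ∨ Sat P w v ψ
  | v, .ex x φ => ∃ u : Elem, elemDom P w u ∧ Sat P w (Function.update v x u) φ

/-- Satisfaction for sentences: `(P,w) ⊨ φ` (the valuation is irrelevant for sentences). -/
def SatS (P : ProcTriple) (w : Exec) (φ : FO) : Prop :=
  Sat P w (fun _ => Sum.inl 0) φ

def FO.free : FO → Finset ℕ
  | .ptype _ x => {x}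
  | .letter _ x => {x}
  | .eq x y => {x, y}
  | .sim x y => {x, y}
  | .lt x y => {x, y}
  | .succ x y => {x, y}
  | .not φ => φ.free
  | .or φ ψ => φ.free ∪ ψ.free
  | .ex x φ => φ.free.erase x

/-- A sentence has no free variables. -/
def FO.isSentence (φ : FO) : Prop := φ.free = ∅

def FO.vars : FO → Finset ℕ
  | .ptype _ x => {x}
  | .letter _ x => {x}
  | .eq x y => {x, y}
  | .sim x y => {x, y}
  | .lt x y => {x, y}
  | .succ x y => {x, y}
  | .not φ => φ.vars
  | .or φ ψ => φ.vars ∪ ψ.vars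
  | .ex x φ => insert x φ.vars

/-- The two-variable fragment: only the variable names `0` and `1` are used. -/
def FO.twoVar (φ : FO) : Prop := φ.vars ⊆ ({0, 1} : Finset ℕ)

/-- The fragment `FO_A[∼]`: neither `<` nor `+1` occurs. -/
def FO.onlySim : FO → Prop
  | .lt _ _ => False
  | .succ _ _ => False
  | .not φ => φ.onlySim
  | .or φ ψ => φ.onlySim ∧ ψ.onlySim
  | .ex _ φ => φ.onlySim
  | _ => True

/-! ### The asynchronous synthesis game and `Win(φ)` -/

/-- A `P`-strategy for System: `none` plays ε, `some σ` proposes the system event `σ`. -/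
abbrev Strategy := List Event → Option Event

/-- The strategy only proposes system events (its codomain is `Σ_s ∪ {ε}`). -/
def properStrategy (Alph : Alphabet) (P : ProcTriple) (f : Strategy) : Prop :=
  ∀ u σ, f u = some σ → isSysEvent Alph P σ

/-- The prefix of length `i` of an execution. -/
def Exec.pre : Exec → ℕ → List Event
  | .fin l, i => l.take i
  | .inf g, i => (List.range i).map g

/-- `w` is `f`-compatible: every system event of `w` is the one proposed by `f`. -/
def compatible (Alph : Alphabet) (P : ProcTriple) (f : Strategy) (w : Exec) : Prop :=
  ∀ i σ, w.at? i = some σ → isSysEvent Alph P σ → f (w.pre i) = some σ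

/-- `w` is `f`-fair. -/
def fair (Alph : Alphabet) (P : ProcTriple) (f : Strategy) : Exec → Prop
  | .fin l => f l = none
  | .inf g =>
      {i : ℕ | f (Exec.pre (Exec.inf g) i) ≠ none}.Infinite →
      {j : ℕ | isSysEvent Alph P (g j)}.Infinite

/-- `f` is `P`-winning for `φ`. -/
def winningStrategy (Alph : Alphabet) (P : ProcTriple) (φ : FO) (f : Strategy) : Prop :=
  properStrategy Alph P f ∧
  ∀ w : Exec, w.valid Alph P → compatible Alph P f w → fair Alph P f w → SatS P w φ

/-- Triples of naturals, indexed by the process types (s, e, se). -/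
abbrev Tok := ℕ × ℕ × ℕ

/-- `Win(φ)`: the set of triples `(k_s, k_e, k_se)` admitting a winning System strategy. -/
def WinFO (Alph : Alphabet) (φ : FO) : Set Tok :=
  { k | ∃ P : ProcTriple,
      P.Ps.card = k.1 ∧ P.Pe.card = k.2.1 ∧ P.Pse.card = k.2.2 ∧
      ∃ f : Strategy, winningStrategy Alph P φ f }

/-! ### Parameterized vector games -/

/-- Locations: `L = {0,…,B}^A`. -/
abbrev Loc (n B : ℕ) := Fin n → Fin (B + 1)

/-- A local acceptance condition: for each process type a pair `(⋈, n)`,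
where the Boolean `true` stands for `=` and `false` for `≥`. -/
abbrev LCond := (Bool × ℕ) × (Bool × ℕ) × (Bool × ℕ)

/-- Configurations: `C : L → ℕ^T`. -/
abbrev GConfig (n B : ℕ) := Loc n B → Tok

/-- Transitions: maps `L × L → ℕ^T`. -/
abbrev GTrans (n B : ℕ) := Loc n B → Loc n B → Tok

/-- A parameterized vector game `G = (A, B, F)`. -/
structure PVG where
  Alph : Alphabet
  B : ℕ
  F : List (Loc Alph.n B → LCond)

def cmpHolds (c : Bool × ℕ) (m : ℕ) : Prop := if c.1 then m = c.2 else c.2 ≤ m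

def lcondHolds (κ : LCond) (t : Tok) : Prop :=
  cmpHolds κ.1 t.1 ∧ cmpHolds κ.2.1 t.2.1 ∧ cmpHolds κ.2.2 t.2.2

/-- `C ⊨ F`. -/
def accept (G : PVG) (C : GConfig G.Alph.n G.B) : Prop :=
  ∃ κ ∈ G.F, ∀ ℓ, lcondHolds (κ ℓ) (C ℓ)

/-- `ℓ + a`: increase coordinate `a` by one, capped at `B`. -/
def locAdd {n B : ℕ} (ℓ : Loc n B) (a : ℕ) : Loc n B :=
  fun i =>
    if (i : ℕ) = a then ⟨min ((ℓ i : ℕ) + 1) B, Nat.lt_succ_of_le (min_le_right _ _)⟩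
    else ℓ i

/-- `ℓ + w` for a finite word `w` over the alphabet. -/
def locAddW {n B : ℕ} (ℓ : Loc n B) : List ℕ → Loc n B
  | [] => ℓ
  | a :: u => locAddW (locAdd ℓ a) u

def isSysWord (Alph : Alphabet) (u : List ℕ) : Prop :=
  ∀ a ∈ u, a < Alph.n ∧ Alph.sys a = true

def isEnvWord (Alph : Alphabet) (u : List ℕ) : Prop :=
  ∀ a ∈ u, a < Alph.n ∧ Alph.sys a = false

/-- System transitions: values in `ℕ × {0} × ℕ` and moves along system words. -/
def isSysTrans (G : PVG) (τ : GTrans G.Alph.n G.B) : Prop :=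
  ∀ ℓ ℓ', (τ ℓ ℓ').2.1 = 0 ∧
    (τ ℓ ℓ' ≠ ((0, 0, 0) : Tok) → ∃ u : List ℕ, isSysWord G.Alph u ∧ ℓ' = locAddW ℓ u)

/-- Environment transitions: values in `{0} × ℕ × ℕ` and moves along environment words. -/
def isEnvTrans (G : PVG) (τ : GTrans G.Alph.n G.B) : Prop :=
  ∀ ℓ ℓ', (τ ℓ ℓ').1 = 0 ∧
    (τ ℓ ℓ' ≠ ((0, 0, 0) : Tok) → ∃ u : List ℕ, isEnvWord G.Alph u ∧ ℓ' = locAddW ℓ u)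

def outm {n B : ℕ} (τ : GTrans n B) (ℓ : Loc n B) : Tok := ∑ ℓ' : Loc n B, τ ℓ ℓ'

def inm {n B : ℕ} (τ : GTrans n B) (ℓ : Loc n B) : Tok := ∑ ℓ' : Loc n B, τ ℓ' ℓ

/-- Componentwise order on `ℕ^T`. -/
def tokLe (s t : Tok) : Prop := s.1 ≤ t.1 ∧ s.2.1 ≤ t.2.1 ∧ s.2.2 ≤ t.2.2

def applicable {n B : ℕ} (τ : GTrans n B) (C : GConfig n B) : Prop :=
  ∀ ℓ, tokLe (outm τ ℓ) (C ℓ)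

/-- `τ(C)(ℓ) = C(ℓ) − out_τ(ℓ) + in_τ(ℓ)` (componentwise). -/
def applyT {n B : ℕ} (τ : GTrans n B) (C : GConfig n B) : GConfig n B :=
  fun ℓ => C ℓ - outm τ ℓ + inm τ ℓ

/-- The configuration reached from `C0` after applying the transitions `ts` in order. -/
def confAt {n B : ℕ} (C0 : GConfig n B) (ts : List (GTrans n B)) : GConfig n B :=
  ts.foldl (fun C τ => applyT τ C) C0

/-- A valid `C0`-play, represented by its list of transitions
(step `i`, 0-based, is System's if `i` is even, Environment's if `i` is odd). -/
def validPlay (G : PVG) (C0 : GConfig G.Alph.n G.B)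
    (ts : List (GTrans G.Alph.n G.B)) : Prop :=
  ∀ i (h : i < ts.length),
    applicable (ts.get ⟨i, h⟩) (confAt C0 (ts.take i)) ∧
    (i % 2 = 0 → isSysTrans G (ts.get ⟨i, h⟩) ∧ accept G (confAt C0 (ts.take (i + 1)))) ∧
    (i % 2 = 1 → isEnvTrans G (ts.get ⟨i, h⟩) ∧ ¬ accept G (confAt C0 (ts.take (i + 1))))

/-- A strategy for System in the game: a partial map from plays to transitions. -/
abbrev GStrat (n B : ℕ) := List (GTrans n B) → Option (GTrans n B)

/-- `f(C)` is defined, and whenever `f(π) = τ` for a valid play π ending in `C_i`,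
`τ` is a system transition, applicable at `C_i`, and `τ(C_i) ⊨ F`. -/
def properGStrat (G : PVG) (C0 : GConfig G.Alph.n G.B) (f : GStrat G.Alph.n G.B) : Prop :=
  (f []).isSome ∧
  ∀ ts τ, validPlay G C0 ts → f ts = some τ →
    isSysTrans G τ ∧ applicable τ (confAt C0 ts) ∧ accept G (applyT τ (confAt C0 ts))

def gCompatible {n B : ℕ} (f : GStrat n B) (ts : List (GTrans n B)) : Prop :=
  ∀ i (h : i < ts.length), i % 2 = 0 → f (ts.take i) = some (ts.get ⟨i, h⟩)

def gMaximal (G : PVG) (C0 : GConfig G.Alph.n G.B) (f : GStrat G.Alph.n G.B)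
    (ts : List (GTrans G.Alph.n G.B)) : Prop :=
  ¬ ∃ ts', ts <+: ts' ∧ ts ≠ ts' ∧ validPlay G C0 ts' ∧ gCompatible f ts'

def winningGStrat (G : PVG) (C0 : GConfig G.Alph.n G.B) (f : GStrat G.Alph.n G.B) : Prop :=
  properGStrat G C0 f ∧
  ∀ ts, validPlay G C0 ts → gCompatible f ts → gMaximal G C0 f ts →
    accept G (confAt C0 ts)

/-- A configuration is winning for System if System has a winning strategy from it. -/
def winningConf (G : PVG) (C0 : GConfig G.Alph.n G.B) : Prop :=
  ∃ f, winningGStrat G C0 f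

/-- The all-zero location `ℓ_0`. -/
def loc0 (n B : ℕ) : Loc n B := fun _ => 0

/-- `C_k⃗`: all `k⃗` tokens on `ℓ_0`. -/
def initConfig {n B : ℕ} (k : Tok) : GConfig n B :=
  Function.update (fun _ => ((0, 0, 0) : Tok)) (loc0 n B) k

/-- `Win(G)`. -/
def WinG (G : PVG) : Set Tok :=
  { k | winningConf G (initConfig k) }

/-! ### Environment chains and constants of a game -/

/-- `C <_e C'`. -/
def envStep (G : PVG) (C C' : GConfig G.Alph.n G.B) : Prop :=
  C ≠ C' ∧ ∃ τ, isEnvTrans G τ ∧ applicable τ C ∧ C' = applyT τ C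

/-- There is a chain `C = C_0 <_e C_1 <_e … <_e C_d`. -/
def hasChain (G : PVG) (C : GConfig G.Alph.n G.B) (d : ℕ) : Prop :=
  ∃ cs : ℕ → GConfig G.Alph.n G.B, cs 0 = C ∧ ∀ i < d, envStep G (cs i) (cs (i + 1))

/-- `C ∈ Conf_d`: the longest `<_e`-chain starting in `C` has length exactly `d`. -/
def ConfD (G : PVG) (C : GConfig G.Alph.n G.B) (d : ℕ) : Prop :=
  hasChain G C d ∧ ¬ hasChain G C (d + 1)

def lcondMax (κ : LCond) : ℕ := max κ.1.2 (max κ.2.1.2 κ.2.2.2)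

/-- `K`: the largest constant occurring in the acceptance condition `F`. -/
def maxConst (G : PVG) : ℕ :=
  (G.F.map fun κ => Finset.univ.sup fun ℓ : Loc G.Alph.n G.B => lcondMax (κ ℓ)).foldr max 0

/-- `|A_e|`: the number of environment letters. -/
def envCard (Alph : Alphabet) : ℕ :=
  ((Finset.range Alph.n).filter fun a => Alph.sys a = false).card

/-- `|L| = (B+1)^|A|`. -/
def numLoc (G : PVG) : ℕ := (G.B + 1) ^ G.Alph.n

/-! ### Cutoffs -/

/-- `k⃗_0` is a cutoff of `W` with respect to `(N_s, N_e, N_se)`. -/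
def IsCutoff (Ns Ne Nse : Set ℕ) (W : Set Tok) (k0 : Tok) : Prop :=
  k0.1 ∈ Ns ∧ k0.2.1 ∈ Ne ∧ k0.2.2 ∈ Nse ∧
  ((∀ k : Tok, k.1 ∈ Ns → k.2.1 ∈ Ne → k.2.2 ∈ Nse →
      k0.1 ≤ k.1 → k0.2.1 ≤ k.2.1 → k0.2.2 ≤ k.2.2 → k ∈ W) ∨
   (∀ k : Tok, k.1 ∈ Ns → k.2.1 ∈ Ne → k.2.2 ∈ Nse →
      k0.1 ≤ k.1 → k0.2.1 ≤ k.2.1 → k0.2.2 ≤ k.2.2 → k ∉ W))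

/-! ### Counting formulas and the normal form for FO[∼] -/

def FO.and (φ ψ : FO) : FO := FO.not (FO.or (FO.not φ) (FO.not ψ))

def FO.imp (φ ψ : FO) : FO := FO.or (FO.not φ) ψ

def FO.iff (φ ψ : FO) : FO := FO.and (φ.imp ψ) (ψ.imp φ)

def FO.all (x : ℕ) (φ : FO) : FO := FO.not (FO.ex x (FO.not φ))

def trueFO : FO := FO.eq 0 0

def bigAnd (l : List FO) : FO := l.foldr FO.and trueFO

def bigOr (l : List FO) : FO := l.foldr FO.or (FO.not trueFO)

/-- `∃^{≥m} y. (mk y)`: there are at least `m` distinct witnesses; the witness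
variables are `base, base+1, …, base+m-1`. -/
def exGe (m base : ℕ) (mk : ℕ → FO) : FO :=
  let distinct : List FO :=
    (List.range m).flatMap fun i =>
      ((List.range m).filter fun j => decide (i < j)).map fun j =>
        FO.not (FO.eq (base + i) (base + j))
  let body : FO :=
    FO.and (bigAnd distinct) (bigAnd ((List.range m).map fun i => mk (base + i)))
  ((List.range m).map (base + ·)).foldr FO.ex body

/-- `∃^{=m} y. (mk y) := ∃^{≥m} y. (mk y) ∧ ¬ ∃^{≥m+1} y. (mk y)`. -/
def exEq (m base : ℕ) (mk : ℕ → FO) : FO :=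
  FO.and (exGe m base mk) (FO.not (exGe (m + 1) base mk))

/-- `ψ_{B,ℓ}(y)`: in the class of `y`, each letter `a` occurs exactly `ℓ(a)` times
if `ℓ(a) < B`, and at least `ℓ(a)` times if `ℓ(a) = B`. -/
def psiCount (n B : ℕ) (ℓ : ℕ → ℕ) (y : ℕ) : FO :=
  bigAnd ((List.range n).map fun a =>
    if ℓ a < B then
      exEq (ℓ a) (y + 1) (fun z => FO.and (FO.sim y z) (FO.letter a z))
    else
      exGe (ℓ a) (y + 1) (fun z => FO.and (FO.sim y z) (FO.letter a z)))

/-- `∃^{⋈m} y. (θ(y) ∧ ψ_{B,ℓ}(y))`, where `⋈` is `=` if `isEq` and `≥` otherwise. -/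
def nfAtom (n B : ℕ) (isEq : Bool) (m : ℕ) (θ : PType) (ℓ : ℕ → ℕ) : FO :=
  let mk : ℕ → FO := fun y => FO.and (FO.ptype θ y) (psiCount n B ℓ y)
  if isEq then exEq m 0 mk else exGe m 0 mk

/-! ### The normalized synthesis problem -/

/-- A normalized strategy: maps finite executions to finite system words. -/
abbrev NormStrategy := List Event → Option (List Event)

/-- A normalized `P`-execution, given by its block decomposition `bs`
(`bs[j]` with `j` even is a System block, `j` odd an Environment block;
this corresponds to the 1-based indexing `w = w_1 … w_n` of the paper). -/
def NormExec (Alph : Alphabet) (P : ProcTriple) (φ : FO) (bs : List (List Event)) : Prop :=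
  1 ≤ bs.length ∧
  ∀ j (h : j < bs.length),
    (j % 2 = 0 → (∀ σ ∈ bs.get ⟨j, h⟩, isSysEvent Alph P σ) ∧
        SatS P (Exec.fin ((bs.take (j + 1)).flatten)) φ) ∧
    (j % 2 = 1 → (∀ σ ∈ bs.get ⟨j, h⟩, isEnvEvent Alph P σ) ∧
        ¬ SatS P (Exec.fin ((bs.take (j + 1)).flatten)) φ)

/-- Properness of a normalized strategy: `f(ε)` is defined, outputs are system
words, and `(P, w · f(w)) ⊨ φ` whenever `f(w)` is defined. -/
def properNStrat (Alph : Alphabet) (P : ProcTriple) (φ : FO) (f : NormStrategy) : Prop :=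
  (f []).isSome ∧
  ∀ w u, f w = some u →
    (∀ σ ∈ u, isSysEvent Alph P σ) ∧ SatS P (Exec.fin (w ++ u)) φ

def nCompatible (f : NormStrategy) (bs : List (List Event)) : Prop :=
  ∀ j (h : j < bs.length), j % 2 = 0 → f ((bs.take j).flatten) = some (bs.get ⟨j, h⟩)

def nMaximal (Alph : Alphabet) (P : ProcTriple) (φ : FO) (f : NormStrategy)
    (bs : List (List Event)) : Prop :=
  ¬ ∃ bs', bs <+: bs' ∧ bs ≠ bs' ∧ NormExec Alph P φ bs' ∧ nCompatible f bs'

def winningNStrategy (Alph : Alphabet) (P : ProcTriple) (φ : FO) (f : NormStrategy) : Prop :=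
  properNStrat Alph P φ f ∧
  ∀ bs, NormExec Alph P φ bs → nCompatible f bs → nMaximal Alph P φ f bs →
    SatS P (Exec.fin bs.flatten) φ

/-- `NWin(φ)`. -/
def NWin (Alph : Alphabet) (φ : FO) : Set Tok :=
  { k | ∃ P : ProcTriple,
      P.Ps.card = k.1 ∧ P.Pe.card = k.2.1 ∧ P.Pse.card = k.2.2 ∧
      ∃ f : NormStrategy, winningNStrategy Alph P φ f }

/-! ### Concrete alphabet and formulas of the examples -/

/-- The alphabet with `A_s = {a, b} = {0, 1}` and `A_e = {c, d} = {2, 3}`. -/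
def alph4 : Alphabet := ⟨4, fun a => decide (a < 2)⟩

/-- `φ_1 = ∀x.((s(x) ∨ se(x)) → ∃y.(x∼y ∧ (a(y) ∨ b(y))))`. -/
def phi1 : FO :=
  FO.all 0 (FO.imp (FO.or (FO.ptype .s 0) (FO.ptype .se 0))
    (FO.ex 1 (FO.and (FO.sim 0 1) (FO.or (FO.letter 0 1) (FO.letter 1 1)))))

/-- `φ_4 = ∀x.((∃^{=2}y.(x∼y ∧ a(y))) ↔ (∃^{=2}y.(x∼y ∧ d(y))))`. -/
def phi4 : FO :=
  FO.all 0 (FO.iff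
    (exEq 2 1 fun y => FO.and (FO.sim 0 y) (FO.letter 0 y))
    (exEq 2 1 fun y => FO.and (FO.sim 0 y) (FO.letter 3 y)))

/-- Vectors `{0,…,3}^{4}` as functions `ℕ → ℕ`. -/
def vec4 (v0 v1 v2 v3 : ℕ) : ℕ → ℕ := fun i => [v0, v1, v2, v3].getD i 0

def allVecs4 : List (ℕ → ℕ) :=
  (List.range 4).flatMap fun v0 =>
    (List.range 4).flatMap fun v1 =>
      (List.range 4).flatMap fun v2 =>
        (List.range 4).map fun v3 => vec4 v0 v1 v2 v3

/-- `Z`: vectors with `ℓ(a) = 2 ≠ ℓ(d)` or `ℓ(d) = 2 ≠ ℓ(a)` (letters `a = 0`, `d = 3`). -/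
def Zvecs : List (ℕ → ℕ) :=
  allVecs4.filter fun ℓ => decide ((ℓ 0 = 2 ∧ ℓ 3 ≠ 2) ∨ (ℓ 3 = 2 ∧ ℓ 0 ≠ 2))

/-- `φ_4' = ⋀_{θ ∈ T, ℓ ∈ Z} ∃^{=0} y.(θ(y) ∧ ψ_{3,ℓ}(y))`. -/
def phi4' : FO :=
  bigAnd (([PType.s, PType.e, PType.se].flatMap fun θ =>
    Zvecs.map fun ℓ => nfAtom 4 3 true 0 θ ℓ))

/-! ### Effective encodings of inputs (for decidability statements) -/

def decodePType (k : ℕ) : PType :=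
  if k % 3 = 0 then .s else if k % 3 = 1 then .e else .se

/-- Surjective decoding of formulas from naturals (with fuel). -/
def decodeFOAux : ℕ → ℕ → FO
  | 0, _ => FO.eq 0 0
  | fuel + 1, c =>
    let t := c % 9
    let m := c / 9
    let a := m.unpair.1
    let b := m.unpair.2
    if t = 0 then FO.ptype (decodePType a) b
    else if t = 1 then FO.letter a b
    else if t = 2 then FO.eq a b
    else if t = 3 then FO.sim a b
    else if t = 4 then FO.lt a b
    else if t = 5 then FO.succ a b
    else if t = 6 then FO.not (decodeFOAux fuel m)
    else if t = 7 then FO.or (decodeFOAux fuel a) (decodeFOAux fuel b)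
    else FO.ex a (decodeFOAux fuel b)

def decodeFO (c : ℕ) : FO := decodeFOAux c c

/-- Decoding an input of the synthesis/satisfiability problems: an alphabet
(size and partition) together with a formula. -/
def decodeFOInput (c : ℕ) : Alphabet × FO :=
  (⟨c.unpair.1.unpair.1, fun a => (c.unpair.1.unpair.2).testBit a⟩, decodeFO c.unpair.2)

def decodeBN (m : ℕ) : Bool × ℕ := (decide (m % 2 = 0), m / 2)

def decodeLCond (m : ℕ) : LCond :=
  (decodeBN m.unpair.1, decodeBN m.unpair.2.unpair.1, decodeBN m.unpair.2.unpair.2)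

/-- An explicit index of a location, used to decode local acceptance conditions. -/
def locIndex {n B : ℕ} (ℓ : Loc n B) : ℕ := ∑ i : Fin n, (ℓ i : ℕ) * (B + 1) ^ (i : ℕ)

/-- Decoding a parameterized vector game from a natural number. -/
def decodeGame (c : ℕ) : PVG :=
  let n := c.unpair.1.unpair.1
  let sy := c.unpair.1.unpair.2
  let B := c.unpair.2.unpair.1
  let Fc := c.unpair.2.unpair.2
  { Alph := ⟨n, fun a => sy.testBit a⟩
    B := B
    F := (Denumerable.ofNat (List ℕ) Fc).map fun kc =>
      fun ℓ => decodeLCond ((Denumerable.ofNat (List ℕ) kc).getD (locIndex ℓ) 0) }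

/-- Elements with a given process and letter (the counted set). -/
def SimCl (P : ProcTriple) (w : Exec) (u : Elem) (a : ℕ) : Set Elem :=
  {z | elemDom P w z ∧ ((procOf w u).isSome ∧ procOf w u = procOf w z) ∧
       letterOf w z = some a}

noncomputable def cnt (P : ProcTriple) (w : Exec) (u : Elem) (a : ℕ) : ℕ∞ :=
  (SimCl P w u a).encard

lemma sat_and {P w v φ ψ} : Sat P w v (FO.and φ ψ) ↔ Sat P w v φ ∧ Sat P w v ψ := by
  simp [FO.and, Sat]

lemma sat_true {P w v} : Sat P w v trueFO := rfl

lemma sat_bigAnd {P w v l} : Sat P w v (bigAnd l) ↔ ∀ φ ∈ l, Sat P w v φ := by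
  induction l with
  | nil => simpa [bigAnd] using sat_true
  | cons a l ih =>
      simp only [bigAnd, List.foldr] at ih ⊢
      rw [sat_and, ih]; simp

/-- The key hypothesis: `mk k` evaluates to `Q` of the value of `k`. -/
def Hyp (P : ProcTriple) (w : Exec) (v : ℕ → Elem) (base : ℕ) (mk : ℕ → FO)
    (Q : Elem → Prop) : Prop :=
  ∀ (v' : ℕ → Elem) k, base ≤ k → (∀ j, j < base → v' j = v j) →
    (Sat P w v' (mk k) ↔ Q (v' k))

def SQ (P : ProcTriple) (w : Exec) (Q : Elem → Prop) : Set Elem :=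
  {z | elemDom P w z ∧ Q z}

lemma two_le_encard_iff {S : Set Elem} :
    2 ≤ S.encard ↔ ∃ x y, x ∈ S ∧ y ∈ S ∧ x ≠ y := by
  constructor
  · intro h
    obtain ⟨t, ht, hc⟩ := Set.exists_subset_encard_eq h
    obtain ⟨x, y, hxy, rfl⟩ := Set.encard_eq_two.mp hc
    exact ⟨x, y, ht (by simp), ht (by simp), hxy⟩
  · rintro ⟨x, y, hx, hy, hxy⟩
    calc (2 : ℕ∞) = ({x, y} : Set Elem).encard := (Set.encard_pair hxy).symm
    _ ≤ S.encard := Set.encard_mono (by intro z hz; rcases hz with rfl | rfl <;> simpa)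

lemma three_le_encard_iff {S : Set Elem} :
    3 ≤ S.encard ↔ ∃ x y z, x ∈ S ∧ y ∈ S ∧ z ∈ S ∧ x ≠ y ∧ x ≠ z ∧ y ≠ z := by
  constructor
  · intro h
    obtain ⟨t, ht, hc⟩ := Set.exists_subset_encard_eq h
    obtain ⟨x, y, z, h1, h2, h3, rfl⟩ := Set.encard_eq_three.mp hc
    exact ⟨x, y, z, ht (by simp), ht (by simp), ht (by simp), h1, h2, h3⟩
  · rintro ⟨x, y, z, hx, hy, hz, h1, h2, h3⟩
    calc (3 : ℕ∞) = ({x, y, z} : Set Elem).encard :=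
          (Set.encard_eq_three.mpr ⟨x, y, z, h1, h2, h3, rfl⟩).symm
    _ ≤ S.encard := Set.encard_mono (by intro u hu; rcases hu with rfl | rfl | rfl <;> simpa)


lemma sat_ex {P w v x φ} :
    Sat P w v (FO.ex x φ) ↔ ∃ u, elemDom P w u ∧ Sat P w (Function.update v x u) φ :=
  Iff.rfl

lemma sat_not {P w v φ} : Sat P w v (FO.not φ) ↔ ¬ Sat P w v φ := Iff.rfl

lemma sat_eqv {P w v x y} : Sat P w v (FO.eq x y) ↔ v x = v y := Iff.rfl

lemma update_eval {v : ℕ → Elem} {k j : ℕ} {u : Elem} (h : j ≠ k) :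
    Function.update v k u j = v j := Function.update_of_ne h u v

section UpdEval
variable (v : ℕ → Elem) (base : ℕ) (u0 u1 u2 : Elem)

lemma upd1_lt {j} (h : j < base) : Function.update v base u0 j = v j :=
  update_eval (by omega)
lemma upd1_0 : Function.update v base u0 base = u0 := Function.update_self _ _ _

lemma upd2_lt {j} (h : j < base) :
    Function.update (Function.update v base u0) (base+1) u1 j = v j := by
  rw [update_eval (by omega), update_eval (by omega)]
lemma upd2_0 : Function.update (Function.update v base u0) (base+1) u1 base = u0 := by
  rw [update_eval (by omega), Function.update_self]
lemma upd2_1 : Function.update (Function.update v base u0) (base+1) u1 (base+1) = u1 :=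
  Function.update_self _ _ _

lemma upd3_lt {j} (h : j < base) :
    Function.update (Function.update (Function.update v base u0) (base+1) u1) (base+2) u2 j
      = v j := by
  rw [update_eval (by omega), update_eval (by omega), update_eval (by omega)]
lemma upd3_0 :
    Function.update (Function.update (Function.update v base u0) (base+1) u1) (base+2) u2 base
      = u0 := by
  rw [update_eval (by omega), update_eval (by omega), Function.update_self]
lemma upd3_1 :
    Function.update (Function.update (Function.update v base u0) (base+1) u1) (base+2) u2 (base+1)
      = u1 := by
  rw [update_eval (by omega), Function.update_self]
lemma upd3_2 :
    Function.update (Function.update (Function.update v base u0) (base+1) u1) (base+2) u2 (base+2)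
      = u2 := Function.update_self _ _ _

end UpdEval

lemma sat_exGe0 {P w v base mk} : Sat P w v (exGe 0 base mk) := by
  have h : exGe 0 base mk = FO.and (bigAnd []) (bigAnd []) := rfl
  rw [h, sat_and]; simp [sat_bigAnd]

lemma sat_exGe1 {P w v base mk Q} (H : Hyp P w v base mk Q) :
    Sat P w v (exGe 1 base mk) ↔ 1 ≤ (SQ P w Q).encard := by
  have h : exGe 1 base mk = FO.ex base (FO.and (bigAnd []) (bigAnd [mk base])) := rfl
  rw [h, Set.one_le_encard_iff_nonempty]
  simp only [sat_ex, sat_and, sat_bigAnd, List.mem_singleton, List.not_mem_nil,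
    false_implies, implies_true, true_and, forall_eq]
  constructor
  · rintro ⟨u, hu, hmk⟩
    have := (H _ base le_rfl (fun j hj => upd1_lt v base u hj)).mp hmk
    rw [upd1_0] at this
    exact ⟨u, hu, this⟩
  · rintro ⟨u, hu, hQ⟩
    refine ⟨u, hu, ?_⟩
    rw [H _ base le_rfl (fun j hj => upd1_lt v base u hj), upd1_0]
    exact hQ

lemma sat_exGe2 {P w v base mk Q} (H : Hyp P w v base mk Q) :
    Sat P w v (exGe 2 base mk) ↔ 2 ≤ (SQ P w Q).encard := by
  have h : exGe 2 base mk = FO.ex base (FO.ex (base+1)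
      (FO.and (bigAnd [FO.not (FO.eq base (base+1))])
              (bigAnd [mk base, mk (base+1)]))) := rfl
  rw [h, two_le_encard_iff]
  simp only [sat_ex, sat_and, sat_bigAnd, sat_not, sat_eqv, List.mem_singleton,
    List.mem_cons, List.not_mem_nil, or_false, forall_eq, forall_eq_or_imp]
  constructor
  · rintro ⟨u0, hu0, u1, hu1, hne, hmk0, hmk1⟩
    have hag : ∀ j, j < base → Function.update (Function.update v base u0) (base+1) u1 j = v j :=
      fun j hj => upd2_lt v base u0 u1 hj
    have q0 := (H _ base le_rfl hag).mp hmk0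
    have q1 := (H _ (base+1) (by omega) hag).mp hmk1
    rw [upd2_0] at q0; rw [upd2_1] at q1
    rw [upd2_0, upd2_1] at hne
    exact ⟨u0, u1, ⟨hu0, q0⟩, ⟨hu1, q1⟩, hne⟩
  · rintro ⟨u0, u1, ⟨hu0, q0⟩, ⟨hu1, q1⟩, hne⟩
    have hag : ∀ j, j < base → Function.update (Function.update v base u0) (base+1) u1 j = v j :=
      fun j hj => upd2_lt v base u0 u1 hj
    refine ⟨u0, hu0, u1, hu1, ?_, ?_, ?_⟩
    · rw [upd2_0, upd2_1]; exact hne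
    · rw [H _ base le_rfl hag, upd2_0]; exact q0
    · rw [H _ (base+1) (by omega) hag, upd2_1]; exact q1

lemma sat_exGe3 {P w v base mk Q} (H : Hyp P w v base mk Q) :
    Sat P w v (exGe 3 base mk) ↔ 3 ≤ (SQ P w Q).encard := by
  have h : exGe 3 base mk = FO.ex base (FO.ex (base+1) (FO.ex (base+2)
      (FO.and (bigAnd [FO.not (FO.eq base (base+1)), FO.not (FO.eq base (base+2)),
                       FO.not (FO.eq (base+1) (base+2))])
              (bigAnd [mk base, mk (base+1), mk (base+2)])))) := rfl
  rw [h, three_le_encard_iff]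
  simp only [sat_ex, sat_and, sat_bigAnd, sat_not, sat_eqv, List.mem_singleton,
    List.mem_cons, List.not_mem_nil, or_false, forall_eq, forall_eq_or_imp]
  constructor
  · rintro ⟨u0, hu0, u1, hu1, u2, hu2, ⟨h01, h02, h12⟩, hmk0, hmk1, hmk2⟩
    have hag : ∀ j, j < base →
        Function.update (Function.update (Function.update v base u0) (base+1) u1)
          (base+2) u2 j = v j := fun j hj => upd3_lt v base u0 u1 u2 hj
    have q0 := (H _ base le_rfl hag).mp hmk0
    have q1 := (H _ (base+1) (by omega) hag).mp hmk1
    have q2 := (H _ (base+2) (by omega) hag).mp hmk2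
    rw [upd3_0] at q0; rw [upd3_1] at q1; rw [upd3_2] at q2
    rw [upd3_0, upd3_1] at h01; rw [upd3_0, upd3_2] at h02; rw [upd3_1, upd3_2] at h12
    exact ⟨u0, u1, u2, ⟨hu0, q0⟩, ⟨hu1, q1⟩, ⟨hu2, q2⟩, h01, h02, h12⟩
  · rintro ⟨u0, u1, u2, ⟨hu0, q0⟩, ⟨hu1, q1⟩, ⟨hu2, q2⟩, h01, h02, h12⟩
    have hag : ∀ j, j < base →
        Function.update (Function.update (Function.update v base u0) (base+1) u1)
          (base+2) u2 j = v j := fun j hj => upd3_lt v base u0 u1 u2 hj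
    refine ⟨u0, hu0, u1, hu1, u2, hu2, ⟨?_, ?_, ?_⟩, ?_, ?_, ?_⟩
    · rw [upd3_0, upd3_1]; exact h01
    · rw [upd3_0, upd3_2]; exact h02
    · rw [upd3_1, upd3_2]; exact h12
    · rw [H _ base le_rfl hag, upd3_0]; exact q0
    · rw [H _ (base+1) (by omega) hag, upd3_1]; exact q1
    · rw [H _ (base+2) (by omega) hag, upd3_2]; exact q2

lemma encard_eq_iff_le_not_le {S : Set Elem} {m : ℕ} :
    (m : ℕ∞) ≤ S.encard ∧ ¬ ((m : ℕ∞) + 1 ≤ S.encard) ↔ S.encard = m := by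
  rw [ENat.add_one_le_iff (by exact_mod_cast WithTop.coe_ne_top)]
  constructor
  · rintro ⟨h1, h2⟩; exact le_antisymm (not_lt.mp h2) h1
  · intro h; exact ⟨h.ge, by rw [h]; exact lt_irrefl _⟩

lemma sat_exEq0 {P w v base mk Q} (H : Hyp P w v base mk Q) :
    Sat P w v (exEq 0 base mk) ↔ (SQ P w Q).encard = 0 := by
  rw [show exEq 0 base mk = FO.and (exGe 0 base mk) (FO.not (exGe 1 base mk)) from rfl,
    sat_and, sat_not, sat_exGe1 H]
  have h := encard_eq_iff_le_not_le (S := SQ P w Q) (m := 0)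
  simp only [Nat.cast_zero, zero_add] at h
  rw [← h]
  simp [sat_exGe0]

lemma sat_exEq1 {P w v base mk Q} (H : Hyp P w v base mk Q) :
    Sat P w v (exEq 1 base mk) ↔ (SQ P w Q).encard = 1 := by
  rw [show exEq 1 base mk = FO.and (exGe 1 base mk) (FO.not (exGe 2 base mk)) from rfl,
    sat_and, sat_not, sat_exGe1 H, sat_exGe2 H]
  exact_mod_cast encard_eq_iff_le_not_le (S := SQ P w Q) (m := 1)

lemma sat_exEq2 {P w v base mk Q} (H : Hyp P w v base mk Q) :
    Sat P w v (exEq 2 base mk) ↔ (SQ P w Q).encard = 2 := by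
  rw [show exEq 2 base mk = FO.and (exGe 2 base mk) (FO.not (exGe 3 base mk)) from rfl,
    sat_and, sat_not, sat_exGe2 H, sat_exGe3 H]
  exact_mod_cast encard_eq_iff_le_not_le (S := SQ P w Q) (m := 2)

lemma sat_or {P w v φ ψ} : Sat P w v (FO.or φ ψ) ↔ Sat P w v φ ∨ Sat P w v ψ := Iff.rfl
lemma sat_sim {P w v x y} : Sat P w v (FO.sim x y) ↔
    (procOf w (v x)).isSome ∧ procOf w (v x) = procOf w (v y) := Iff.rfl
lemma sat_letter {P w v a x} : Sat P w v (FO.letter a x) ↔ letterOf w (v x) = some a := Iff.rfl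
lemma sat_ptype {P w v θ x} : Sat P w v (FO.ptype θ x) ↔
    ∃ p, v x = Sum.inl p ∧ p ∈ P.ofType θ := Iff.rfl

lemma sat_all {P w v x φ} :
    Sat P w v (FO.all x φ) ↔ ∀ u, elemDom P w u → Sat P w (Function.update v x u) φ := by
  rw [show FO.all x φ = FO.not (FO.ex x (FO.not φ)) from rfl, sat_not, sat_ex]
  push_neg
  exact Iff.of_eq (by simp [sat_not, not_not])

lemma sat_iff {P w v φ ψ} : Sat P w v (FO.iff φ ψ) ↔ (Sat P w v φ ↔ Sat P w v ψ) := by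
  rw [show FO.iff φ ψ = FO.and (φ.imp ψ) (ψ.imp φ) from rfl, sat_and]
  simp only [FO.imp, sat_or, sat_not]
  tauto

lemma hyp_simletter (P : ProcTriple) (w : Exec) (v : ℕ → Elem) (y a base : ℕ)
    (hy : y < base) :
    Hyp P w v base (fun z => FO.and (FO.sim y z) (FO.letter a z))
      (fun z => ((procOf w (v y)).isSome ∧ procOf w (v y) = procOf w z) ∧
        letterOf w z = some a) := by
  intro v' k hk hag
  rw [sat_and, sat_sim, sat_letter, hag y hy]

lemma SQ_simletter (P : ProcTriple) (w : Exec) (u : Elem) (a : ℕ) :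
    SQ P w (fun z => ((procOf w u).isSome ∧ procOf w u = procOf w z) ∧
      letterOf w z = some a) = SimCl P w u a := rfl

lemma sat_cond {P w} (v : ℕ → Elem) (y a m : ℕ) (hm : m ≤ 3) :
    Sat P w v (if m < 3 then exEq m (y+1) (fun z => FO.and (FO.sim y z) (FO.letter a z))
               else exGe m (y+1) (fun z => FO.and (FO.sim y z) (FO.letter a z))) ↔
      (if m < 3 then cnt P w (v y) a = m else 3 ≤ cnt P w (v y) a) := by
  have H := hyp_simletter P w v y a (y+1) (by omega)
  interval_cases m
  · have h := sat_exEq0 H; rw [SQ_simletter] at h; simpa [cnt] using h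
  · have h := sat_exEq1 H; rw [SQ_simletter] at h; simpa [cnt] using h
  · have h := sat_exEq2 H; rw [SQ_simletter] at h; simpa [cnt] using h
  · have h := sat_exGe3 H; rw [SQ_simletter] at h; simpa [cnt] using h

lemma sat_psiCount {P w} (v : ℕ → Elem) (ℓ : ℕ → ℕ) (y : ℕ) (hℓ : ∀ a, ℓ a ≤ 3) :
    Sat P w v (psiCount 4 3 ℓ y) ↔
      ∀ a, a < 4 → (if ℓ a < 3 then cnt P w (v y) a = ℓ a else 3 ≤ cnt P w (v y) a) := by
  rw [show psiCount 4 3 ℓ y = bigAnd ((List.range 4).map fun a =>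
      if ℓ a < 3 then exEq (ℓ a) (y+1) (fun z => FO.and (FO.sim y z) (FO.letter a z))
      else exGe (ℓ a) (y+1) (fun z => FO.and (FO.sim y z) (FO.letter a z))) from rfl,
    sat_bigAnd]
  constructor
  · intro h a ha
    rw [← sat_cond v y a (ℓ a) (hℓ a)]
    exact h _ (List.mem_map.mpr ⟨a, List.mem_range.mpr ha, rfl⟩)
  · intro h φ hφ
    obtain ⟨a, ha, rfl⟩ := List.mem_map.mp hφ
    rw [sat_cond v y a (ℓ a) (hℓ a)]
    exact h a (List.mem_range.mp ha)

lemma hyp_nfatom (P : ProcTriple) (w : Exec) (v : ℕ → Elem) (θ : PType) (ℓ : ℕ → ℕ)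
    (hℓ : ∀ a, ℓ a ≤ 3) :
    Hyp P w v 0 (fun y => FO.and (FO.ptype θ y) (psiCount 4 3 ℓ y))
      (fun u => (∃ p, u = Sum.inl p ∧ p ∈ P.ofType θ) ∧
        ∀ a, a < 4 → (if ℓ a < 3 then cnt P w u a = ℓ a else 3 ≤ cnt P w u a)) := by
  intro v' k hk hag
  rw [sat_and, sat_ptype, sat_psiCount v' ℓ k hℓ]

lemma sat_nfAtom {P w} (v : ℕ → Elem) (θ : PType) (ℓ : ℕ → ℕ) (hℓ : ∀ a, ℓ a ≤ 3) :
    Sat P w v (nfAtom 4 3 true 0 θ ℓ) ↔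
      ∀ u, elemDom P w u → ¬ ((∃ p, u = Sum.inl p ∧ p ∈ P.ofType θ) ∧
        ∀ a, a < 4 → (if ℓ a < 3 then cnt P w u a = ℓ a else 3 ≤ cnt P w u a)) := by
  rw [show nfAtom 4 3 true 0 θ ℓ =
      exEq 0 0 (fun y => FO.and (FO.ptype θ y) (psiCount 4 3 ℓ y)) from rfl,
    sat_exEq0 (hyp_nfatom P w v θ ℓ hℓ), Set.encard_eq_zero,
    Set.eq_empty_iff_forall_notMem]
  constructor
  · intro h u hu hQ; exact h u ⟨hu, hQ⟩
  · rintro h u ⟨hu, hQ⟩; exact h u hu hQ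

lemma sat_phi4 {P w} (v : ℕ → Elem) :
    Sat P w v phi4 ↔ ∀ u, elemDom P w u → (cnt P w u 0 = 2 ↔ cnt P w u 3 = 2) := by
  rw [show phi4 = FO.all 0 (FO.iff
      (exEq 2 1 fun y => FO.and (FO.sim 0 y) (FO.letter 0 y))
      (exEq 2 1 fun y => FO.and (FO.sim 0 y) (FO.letter 3 y))) from rfl, sat_all]
  apply forall_congr'; intro u
  apply imp_congr_right; intro hu
  rw [sat_iff,
    sat_exEq2 (hyp_simletter P w (Function.update v 0 u) 0 0 1 (by omega)),
    sat_exEq2 (hyp_simletter P w (Function.update v 0 u) 0 3 1 (by omega))]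
  rw [show (Function.update v 0 u) 0 = u from Function.update_self _ _ _]
  rfl

lemma sat_phi4' {P w} (v : ℕ → Elem) :
    Sat P w v phi4' ↔ ∀ θ ∈ [PType.s, PType.e, PType.se], ∀ ℓ ∈ Zvecs,
      Sat P w v (nfAtom 4 3 true 0 θ ℓ) := by
  rw [show phi4' = bigAnd (([PType.s, PType.e, PType.se].flatMap fun θ =>
      Zvecs.map fun ℓ => nfAtom 4 3 true 0 θ ℓ)) from rfl, sat_bigAnd]
  constructor
  · intro h θ hθ ℓ hℓ
    exact h _ (List.mem_flatMap.mpr ⟨θ, hθ, List.mem_map.mpr ⟨ℓ, hℓ, rfl⟩⟩)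
  · intro h φ hφ
    obtain ⟨θ, hθ, hφ⟩ := List.mem_flatMap.mp hφ
    obtain ⟨ℓ, hℓ, rfl⟩ := List.mem_map.mp hφ
    exact h θ hθ ℓ hℓ

lemma mem_allVecs4 {ℓ : ℕ → ℕ} :
    ℓ ∈ allVecs4 ↔ ∃ v0, v0 < 4 ∧ ∃ v1, v1 < 4 ∧ ∃ v2, v2 < 4 ∧ ∃ v3, v3 < 4 ∧
      ℓ = vec4 v0 v1 v2 v3 := by
  simp only [allVecs4, List.mem_flatMap, List.mem_map, List.mem_range]
  constructor
  · rintro ⟨v0, h0, v1, h1, v2, h2, v3, h3, rfl⟩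
    exact ⟨v0, h0, v1, h1, v2, h2, v3, h3, rfl⟩
  · rintro ⟨v0, h0, v1, h1, v2, h2, v3, h3, rfl⟩
    exact ⟨v0, h0, v1, h1, v2, h2, v3, h3, rfl⟩

lemma mem_Zvecs {ℓ : ℕ → ℕ} :
    ℓ ∈ Zvecs ↔ ℓ ∈ allVecs4 ∧ ((ℓ 0 = 2 ∧ ℓ 3 ≠ 2) ∨ (ℓ 3 = 2 ∧ ℓ 0 ≠ 2)) := by
  simp [Zvecs, List.mem_filter]

lemma vec4_le {v0 v1 v2 v3 : ℕ} (h0 : v0 < 4) (h1 : v1 < 4) (h2 : v2 < 4) (h3 : v3 < 4) :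
    ∀ a, vec4 v0 v1 v2 v3 a ≤ 3 := by
  intro a
  rcases a with _ | _ | _ | _ | a <;> simp [vec4] <;> omega

lemma vec4_0 {v0 v1 v2 v3 : ℕ} : vec4 v0 v1 v2 v3 0 = v0 := rfl
lemma vec4_3 {v0 v1 v2 v3 : ℕ} : vec4 v0 v1 v2 v3 3 = v3 := rfl

lemma exists_proc {P : ProcTriple} {w : Exec} (hw : w.valid alph4 P) {u : Elem}
    (hu : elemDom P w u) : ∃ p, procOf w u = some p ∧ p ∈ P.all := by
  cases u with
  | inl p => exact ⟨p, rfl, hu⟩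
  | inr i =>
    obtain ⟨σ, hσ, hmem⟩ : ∃ σ, w.at? i = some σ ∧ isEvent alph4 P σ := by
      cases w with
      | fin l =>
        have hi : i < l.length := hu
        exact ⟨l[i], by simp [Exec.at?, List.getElem?_eq_getElem hi],
          hw _ (List.getElem_mem hi)⟩
      | inf g => exact ⟨g i, rfl, hw i⟩
    refine ⟨σ.2, by show (w.at? i).map Prod.snd = some σ.2; rw [hσ]; rfl, ?_⟩
    simp only [ProcTriple.all, Finset.mem_union]
    rcases hmem with ⟨-, -, h⟩ | ⟨-, -, h⟩ <;> tauto

lemma cnt_congr {P : ProcTriple} {w : Exec} {u u' : Elem} (h : procOf w u = procOf w u')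
    (a : ℕ) : cnt P w u a = cnt P w u' a := by
  unfold cnt SimCl; rw [h]

lemma three_le_of_not_le_two {e : ℕ∞} (h : ¬ e ≤ 2) : 3 ≤ e := by
  rcases eq_or_ne e ⊤ with rfl | hne
  · exact le_top
  · lift e to ℕ using hne
    have hn : ¬ e ≤ 2 := by exact_mod_cast h
    exact_mod_cast (by omega : 3 ≤ e)

lemma coe_toNat_of_le_two {e : ℕ∞} (h : e ≤ 2) : (e.toNat : ℕ∞) = e :=
  ENat.coe_toNat (ne_top_of_le_ne_top (by norm_num) h)

lemma ne_two_of_three_le {e : ℕ∞} (h : 3 ≤ e) : e ≠ 2 := by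
  intro he; rw [he] at h; exact absurd h (by norm_num)

/-- Normal-form instance: over the alphabet `A_s = {a,b}`,
`A_e = {c,d}`, the sentence `φ_4` is equivalent, over all pairs `(P, w)`, to
`φ_4' = ⋀_{θ ∈ T, ℓ ∈ Z} ∃^{=0} y.(θ(y) ∧ ψ_{3,ℓ}(y))`. -/
theorem phi4_normal_form (P : ProcTriple) (w : Exec) (hw : w.valid alph4 P) :
    SatS P w phi4 ↔ SatS P w phi4' := by
  rw [SatS, SatS, sat_phi4, sat_phi4']
  constructor
  · -- φ4 → φ4'
    intro h θ hθ ℓ hℓZ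
    obtain ⟨hA, hZ⟩ := mem_Zvecs.mp hℓZ
    obtain ⟨v0, h0, v1, h1, v2, h2, v3, h3, rfl⟩ := mem_allVecs4.mp hA
    have hle : ∀ a, vec4 v0 v1 v2 v3 a ≤ 3 := vec4_le h0 h1 h2 h3
    rw [sat_nfAtom _ θ _ hle]
    rintro u hu ⟨-, hPsi⟩
    have c0 := hPsi 0 (by norm_num)
    have c3 := hPsi 3 (by norm_num)
    have hiff := h u hu
    -- from the profile, read off the exact/≥ information for letters 0 and 3
    have key : ∀ m : ℕ, m ≤ 3 → ∀ a,
        (if m < 3 then cnt P w u a = m else 3 ≤ cnt P w u a) →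
        (cnt P w u a = 2 ↔ m = 2) := by
      intro m hm a hc
      by_cases hlt : m < 3
      · rw [if_pos hlt] at hc
        constructor
        · intro h2; rw [h2] at hc; exact_mod_cast hc.symm
        · intro h2; rw [hc, h2]; rfl
      · rw [if_neg hlt] at hc
        have hm3 : m = 3 := by omega
        constructor
        · intro h2; exact absurd h2 (ne_two_of_three_le hc)
        · intro h2; omega
    have k0 := key _ (hle 0) 0 c0
    have k3 := key _ (hle 3) 3 c3
    rw [vec4_0] at k0; rw [vec4_3] at k3
    rw [vec4_0, vec4_3] at hZ
    rcases hZ with ⟨e0, e3⟩ | ⟨e3, e0⟩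
    · exact e3 (k3.mp (hiff.mp (k0.mpr e0)))
    · exact e0 (k0.mp (hiff.mpr (k3.mpr e3)))
  · -- φ4' → φ4
    intro h u hu
    obtain ⟨p, hp, hpall⟩ := exists_proc hw hu
    have hcnt : ∀ a, cnt P w u a = cnt P w (Sum.inl p) a :=
      fun a => cnt_congr (by rw [hp]; rfl) a
    obtain ⟨θ, hθmem, hθ⟩ : ∃ θ ∈ [PType.s, PType.e, PType.se], p ∈ P.ofType θ := by
      simp only [ProcTriple.all, Finset.mem_union] at hpall
      rcases hpall with (hm | hm) | hm
      exacts [⟨.s, by simp, hm⟩, ⟨.e, by simp, hm⟩, ⟨.se, by simp, hm⟩]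
    by_contra hne
    set n : ℕ → ℕ := fun a => if cnt P w u a ≤ 2 then (cnt P w u a).toNat else 3 with hn
    have hn4 : ∀ a, n a < 4 := by
      intro a; rw [hn]; dsimp only
      split
      · next hle2 =>
        have : ((cnt P w u a).toNat : ℕ∞) ≤ 2 := by rw [coe_toNat_of_le_two hle2]; exact hle2
        have : (cnt P w u a).toNat ≤ 2 := by exact_mod_cast this
        omega
      · omega
    have hn2 : ∀ a, n a = 2 ↔ cnt P w u a = 2 := by
      intro a; rw [hn]; dsimp only
      split
      · next hle2 =>
        constructor
        · intro h2; rw [← coe_toNat_of_le_two hle2, h2]; rfl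
        · intro h2; rw [h2]; rfl
      · next hgt =>
        constructor
        · intro h2; omega
        · intro h2; exact absurd (h2 ▸ (by norm_num : (2:ℕ∞) ≤ 2)) hgt
    have hPsi : ∀ a, a < 4 →
        (if n a < 3 then cnt P w (Sum.inl p) a = n a else 3 ≤ cnt P w (Sum.inl p) a) := by
      intro a _
      rw [← hcnt a, hn]; dsimp only
      by_cases hle2 : cnt P w u a ≤ 2
      · simp only [if_pos hle2]
        have ht : (cnt P w u a).toNat < 3 := by
          have : ((cnt P w u a).toNat : ℕ∞) ≤ 2 := by
            rw [coe_toNat_of_le_two hle2]; exact hle2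
          have : (cnt P w u a).toNat ≤ 2 := by exact_mod_cast this
          omega
        rw [if_pos ht, coe_toNat_of_le_two hle2]
      · simp only [if_neg hle2, lt_self_iff_false, ↓reduceIte]
        exact three_le_of_not_le_two hle2
    -- build the vector ℓ = vec4 (n 0) (n 1) (n 2) (n 3)
    have hvec : ∀ a, vec4 (n 0) (n 1) (n 2) (n 3) a = if a < 4 then n a else 0 := by
      intro a
      rcases a with _ | _ | _ | _ | a
      · rfl
      · rfl
      · rfl
      · rfl
      · rw [if_neg (by omega)]; rfl
    have hAll : vec4 (n 0) (n 1) (n 2) (n 3) ∈ allVecs4 :=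
      mem_allVecs4.mpr ⟨n 0, hn4 0, n 1, hn4 1, n 2, hn4 2, n 3, hn4 3, rfl⟩
    have hZc : (vec4 (n 0) (n 1) (n 2) (n 3) 0 = 2 ∧ vec4 (n 0) (n 1) (n 2) (n 3) 3 ≠ 2) ∨
        (vec4 (n 0) (n 1) (n 2) (n 3) 3 = 2 ∧ vec4 (n 0) (n 1) (n 2) (n 3) 0 ≠ 2) := by
      rw [vec4_0, vec4_3]
      by_cases h02 : cnt P w u 0 = 2
      · left
        refine ⟨(hn2 0).mpr h02, fun hc => hne ?_⟩
        have := (hn2 3).mp hc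
        exact ⟨fun _ => this, fun _ => h02⟩
      · right
        have h32 : cnt P w u 3 = 2 := by
          by_contra h32
          exact hne ⟨fun hx => absurd hx h02, fun hx => absurd hx h32⟩
        refine ⟨(hn2 3).mpr h32, fun hc => h02 ((hn2 0).mp hc)⟩
    have hmem : vec4 (n 0) (n 1) (n 2) (n 3) ∈ Zvecs := mem_Zvecs.mpr ⟨hAll, hZc⟩
    have hsat := h θ hθmem _ hmem
    rw [sat_nfAtom _ θ _ (vec4_le (hn4 0) (hn4 1) (hn4 2) (hn4 3))] at hsat
    refine hsat (Sum.inl p) hpall ⟨⟨p, rfl, hθ⟩, ?_⟩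
    intro a ha
    rw [hvec a, if_pos ha]
    exact hPsi a ha

end PSyn
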